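/- The formal power series identity (Σ_{n≥0} (d_n/n!) · z^n) · A(z) = z · A'(z) holds in ℚ[[z]]; that is, the exponential generating function of the Nörlund D-numbers d_n = D_n^{(n)} equals z·A'(z)/A(z), the logarithmic derivative form of the arcsinh power series. -/

import Mathlib

open PowerSeries

/-- Formal derivative of a rational power series. -/
noncomputable def D (f : PowerSeries ℚ) : PowerSeries ℚ :=
  PowerSeries.mk fun n => ((n + 1 : ℕ) : ℚ) * PowerSeries.coeff (R := ℚ) (n + 1) f

/-- The power series of `sinh t = (exp t − exp(−t))/2` over `ℚ`. -/
noncomputable def sinhSeries : PowerSeries ℚ :=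
  PowerSeries.C (R := ℚ) (1 / 2) *
    (PowerSeries.exp ℚ - PowerSeries.rescale (-1 : ℚ) (PowerSeries.exp ℚ))

/-- The Maclaurin series of `arcsinh` over `ℚ`:
`A(z) = Σ_{k≥0} (−1)^k (2k)!/(4^k (k!)² (2k+1)) z^{2k+1}`. -/
noncomputable def arsinhSeriesQ : PowerSeries ℚ :=
  PowerSeries.mk fun k =>
    if Odd k then
      (-1 : ℚ) ^ (k / 2) * (Nat.factorial (k - 1) : ℚ)
        / (4 ^ (k / 2) * (Nat.factorial (k / 2) : ℚ) ^ 2 * k)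
    else 0

namespace Norlund

open Finset

/-- Composition `F ∘ A` of power series (meaningful when `A` has zero constant term). -/
noncomputable def pcomp (A F : PowerSeries ℚ) : PowerSeries ℚ :=
  PowerSeries.mk fun n => ∑ k ∈ Finset.range (n + 1),
    PowerSeries.coeff (R := ℚ) k F * PowerSeries.coeff (R := ℚ) n (A ^ k)

variable {A : PowerSeries ℚ}

lemma dmul (f g : PowerSeries ℚ) :
    d⁄dX ℚ (f * g) = f * d⁄dX ℚ g + g * d⁄dX ℚ f := by
  rw [Derivation.leibniz, smul_eq_mul, smul_eq_mul]

lemma coeff_pow_eq_zero (hA : constantCoeff (R := ℚ) A = 0) {k n : ℕ} (h : n < k) :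
    coeff (R := ℚ) n (A ^ k) = 0 := by
  obtain ⟨B, hB⟩ := X_dvd_iff.mpr hA
  rw [hB, mul_pow, coeff_X_pow_mul', if_neg (by omega)]

lemma coeff_pcomp (F : PowerSeries ℚ) (n : ℕ) :
    coeff (R := ℚ) n (pcomp A F)
      = ∑ k ∈ Finset.range (n + 1), coeff (R := ℚ) k F * coeff (R := ℚ) n (A ^ k) := by
  simp [pcomp]

lemma coeff_pcomp_mul (hA : constantCoeff (R := ℚ) A = 0) (F G : PowerSeries ℚ) (n : ℕ) :
    coeff (R := ℚ) n (pcomp A F * G)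
      = ∑ k ∈ Finset.range (n + 1), coeff (R := ℚ) k F * coeff (R := ℚ) n (A ^ k * G) := by
  rw [PowerSeries.coeff_mul]
  have step : ∀ p ∈ antidiagonal n,
      coeff (R := ℚ) p.1 (pcomp A F) * coeff (R := ℚ) p.2 G
        = ∑ k ∈ Finset.range (n + 1),
            coeff (R := ℚ) k F * (coeff (R := ℚ) p.1 (A ^ k) * coeff (R := ℚ) p.2 G) := by
    intro p hp
    have hp1 : p.1 + p.2 = n := Finset.HasAntidiagonal.mem_antidiagonal.mp hp
    calc coeff (R := ℚ) p.1 (pcomp A F) * coeff (R := ℚ) p.2 G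
        = ∑ k ∈ Finset.range (p.1 + 1),
            coeff (R := ℚ) k F * (coeff (R := ℚ) p.1 (A ^ k) * coeff (R := ℚ) p.2 G) := by
          rw [coeff_pcomp, Finset.sum_mul]
          exact Finset.sum_congr rfl fun k _ => by ring
      _ = ∑ k ∈ Finset.range (n + 1),
            coeff (R := ℚ) k F * (coeff (R := ℚ) p.1 (A ^ k) * coeff (R := ℚ) p.2 G) := by
          refine Finset.sum_subset (Finset.range_subset_range.mpr (by omega)) ?_
          intro k hk hk'
          have hlt : p.1 < k := by
            simp only [Finset.mem_range] at hk hk'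
            omega
          rw [coeff_pow_eq_zero hA hlt]
          ring
  calc ∑ p ∈ antidiagonal n, coeff (R := ℚ) p.1 (pcomp A F) * coeff (R := ℚ) p.2 G
      = ∑ p ∈ antidiagonal n, ∑ k ∈ Finset.range (n + 1),
          coeff (R := ℚ) k F * (coeff (R := ℚ) p.1 (A ^ k) * coeff (R := ℚ) p.2 G) :=
        Finset.sum_congr rfl step
    _ = ∑ k ∈ Finset.range (n + 1), ∑ p ∈ antidiagonal n,
          coeff (R := ℚ) k F * (coeff (R := ℚ) p.1 (A ^ k) * coeff (R := ℚ) p.2 G) := Finset.sum_comm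
    _ = ∑ k ∈ Finset.range (n + 1), coeff (R := ℚ) k F * coeff (R := ℚ) n (A ^ k * G) := by
        refine Finset.sum_congr rfl fun k _ => ?_
        rw [← Finset.mul_sum, PowerSeries.coeff_mul]

lemma pcomp_one : pcomp A 1 = 1 := by
  ext n
  rw [coeff_pcomp]
  rw [Finset.sum_eq_single 0]
  · simp
  · intro k _ hk
    simp [coeff_one, hk]
  · intro h
    simp at h

lemma pcomp_add (F G : PowerSeries ℚ) :
    pcomp A (F + G) = pcomp A F + pcomp A G := by
  ext n
  simp [coeff_pcomp, add_mul, Finset.sum_add_distrib]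

lemma pcomp_X (hA : constantCoeff (R := ℚ) A = 0) : pcomp A X = A := by
  ext n
  rw [coeff_pcomp]
  cases n with
  | zero =>
    simpa [coeff_X] using hA.symm
  | succ m =>
    rw [Finset.sum_eq_single 1]
    · simp
    · intro k _ hk
      simp [coeff_X, hk]
    · intro h
      simp at h

lemma pcomp_mul (hA : constantCoeff (R := ℚ) A = 0) (F G : PowerSeries ℚ) :
    pcomp A (F * G) = pcomp A F * pcomp A G := by
  ext n
  have hR : coeff (R := ℚ) n (pcomp A F * pcomp A G)
      = ∑ k ∈ Finset.range (n + 1), ∑ l ∈ Finset.range (n + 1),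
          coeff (R := ℚ) k F * coeff (R := ℚ) l G * coeff (R := ℚ) n (A ^ (k + l)) := by
    rw [coeff_pcomp_mul hA]
    refine Finset.sum_congr rfl fun k _ => ?_
    rw [mul_comm (A ^ k), coeff_pcomp_mul hA, Finset.mul_sum]
    refine Finset.sum_congr rfl fun l _ => ?_
    rw [← pow_add, add_comm l k]
    ring
  have hL : coeff (R := ℚ) n (pcomp A (F * G))
      = ∑ m ∈ Finset.range (n + 1), ∑ p ∈ antidiagonal m,
          coeff (R := ℚ) p.1 F * coeff (R := ℚ) p.2 G * coeff (R := ℚ) n (A ^ (p.1 + p.2)) := by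
    rw [coeff_pcomp]
    refine Finset.sum_congr rfl fun m hm => ?_
    rw [PowerSeries.coeff_mul, Finset.sum_mul]
    refine Finset.sum_congr rfl fun p hp => ?_
    rw [Finset.HasAntidiagonal.mem_antidiagonal.mp hp]
  rw [hL, hR]
  -- reindex: triangle sum over antidiagonals = square sum (extra terms vanish)
  have hdisj : (↑(Finset.range (n + 1)) : Set ℕ).PairwiseDisjoint
      (fun m => (antidiagonal m : Finset (ℕ × ℕ))) := by
    intro a _ b _ hab
    simp only [Finset.disjoint_left]
    intro p hpa hpb
    exact hab (by rw [← Finset.HasAntidiagonal.mem_antidiagonal.mp hpa, ← Finset.HasAntidiagonal.mem_antidiagonal.mp hpb])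
  rw [← Finset.sum_biUnion hdisj]
  have hbi : (Finset.range (n + 1)).biUnion (fun m => antidiagonal m)
      = ((Finset.range (n + 1)) ×ˢ (Finset.range (n + 1))).filter
          (fun p => p.1 + p.2 ≤ n) := by
    ext p
    simp only [Finset.mem_biUnion, Finset.mem_range, Finset.HasAntidiagonal.mem_antidiagonal,
      Finset.mem_filter, Finset.mem_product]
    constructor
    · rintro ⟨m, hm, rfl⟩
      omega
    · rintro ⟨⟨h1, h2⟩, h3⟩
      exact ⟨p.1 + p.2, by omega, rfl⟩
  rw [hbi]
  rw [Finset.sum_filter_of_ne]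
  · rw [Finset.sum_product]
  · intro p _ hp
    by_contra hle
    push_neg at hle
    rw [coeff_pow_eq_zero hA hle, mul_zero] at hp
    exact hp rfl

lemma pcomp_pow (hA : constantCoeff (R := ℚ) A = 0) (F : PowerSeries ℚ) (k : ℕ) :
    pcomp A (F ^ k) = (pcomp A F) ^ k := by
  induction k with
  | zero => simpa using pcomp_one
  | succ m ih => rw [pow_succ, pow_succ, pcomp_mul hA, ih]

lemma pcomp_derivative (hA : constantCoeff (R := ℚ) A = 0) (F : PowerSeries ℚ) :
    d⁄dX ℚ (pcomp A F) = pcomp A (d⁄dX ℚ F) * d⁄dX ℚ A := by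
  ext n
  rw [coeff_derivative, coeff_pcomp, coeff_pcomp_mul hA]
  have hterm : ∀ k : ℕ, coeff (R := ℚ) (n + 1) (A ^ k) * ((n : ℚ) + 1)
      = (k : ℚ) * coeff (R := ℚ) n (A ^ (k - 1) * d⁄dX ℚ A) := by
    intro k
    have h := coeff_derivative (A ^ k) n
    rw [Derivation.leibniz_pow, smul_eq_mul, nsmul_eq_mul] at h
    rw [← map_natCast (C (R := ℚ)) k, coeff_C_mul] at h
    push_cast at h ⊢
    linarith [h]
  calc (∑ k ∈ Finset.range (n + 1 + 1), coeff (R := ℚ) k F * coeff (R := ℚ) (n + 1) (A ^ k)) * ((n : ℚ) + 1)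
      = ∑ k ∈ Finset.range (n + 2),
          coeff (R := ℚ) k F * ((k : ℚ) * coeff (R := ℚ) n (A ^ (k - 1) * d⁄dX ℚ A)) := by
        rw [Finset.sum_mul]
        refine Finset.sum_congr rfl fun k _ => ?_
        rw [mul_assoc, hterm k]
    _ = ∑ k ∈ Finset.range (n + 1),
          coeff (R := ℚ) (k + 1) F * (((k : ℚ) + 1) * coeff (R := ℚ) n (A ^ k * d⁄dX ℚ A)) := by
        rw [Finset.sum_range_succ']
        simp
    _ = ∑ k ∈ Finset.range (n + 1), coeff (R := ℚ) k (d⁄dX ℚ F) * coeff (R := ℚ) n (A ^ k * d⁄dX ℚ A) := by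
        refine Finset.sum_congr rfl fun k _ => ?_
        rw [coeff_derivative]
        push_cast
        ring

lemma D_eq (f : PowerSeries ℚ) : D f = d⁄dX ℚ f := by
  ext n
  rw [D, coeff_mk, coeff_derivative]
  push_cast
  ring

lemma eq_C_of_d_eq_zero {f : PowerSeries ℚ} (h : d⁄dX ℚ f = 0) :
    f = C (R := ℚ) (constantCoeff (R := ℚ) f) := by
  ext n
  cases n with
  | zero => simp [coeff_zero_eq_constantCoeff]
  | succ m =>
    have hm := congrArg (coeff (R := ℚ) m) h
    rw [coeff_derivative, map_zero] at hm
    have : coeff (R := ℚ) (m + 1) f = 0 := by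
      have hne : ((m : ℚ) + 1) ≠ 0 := by positivity
      rcases mul_eq_zero.mp hm with h' | h'
      · exact h'
      · exact absurd h' hne
    rw [this, coeff_C, if_neg (by omega)]

/-! ### sinh and cosh -/

noncomputable def coshSeries : PowerSeries ℚ :=
  PowerSeries.C (R := ℚ) (1 / 2) *
    (PowerSeries.exp ℚ + PowerSeries.rescale (-1 : ℚ) (PowerSeries.exp ℚ))

lemma d_exp : d⁄dX ℚ (exp ℚ) = exp ℚ := by
  ext n
  rw [coeff_derivative, coeff_exp, coeff_exp, Nat.factorial_succ]
  simp only [Algebra.algebraMap_self, RingHom.id_apply]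
  have h0 : ((n : ℚ) + 1) ≠ 0 := by positivity
  have h1 : ((n.factorial : ℚ)) ≠ 0 := Nat.cast_ne_zero.mpr n.factorial_ne_zero
  push_cast
  field_simp

lemma d_expneg : d⁄dX ℚ (rescale (-1 : ℚ) (exp ℚ)) = -(rescale (-1 : ℚ) (exp ℚ)) := by
  ext n
  rw [coeff_derivative, coeff_rescale, map_neg, coeff_rescale, coeff_exp, coeff_exp,
    Nat.factorial_succ, pow_succ]
  simp only [Algebra.algebraMap_self, RingHom.id_apply]
  have h0 : ((n : ℚ) + 1) ≠ 0 := by positivity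
  have h1 : ((n.factorial : ℚ)) ≠ 0 := Nat.cast_ne_zero.mpr n.factorial_ne_zero
  push_cast
  field_simp
  all_goals ring

lemma d_sinh : d⁄dX ℚ sinhSeries = coshSeries := by
  rw [sinhSeries, coshSeries, dmul, derivative_C, map_sub, d_exp, d_expneg]
  ring

lemma cosh_sq : coshSeries ^ 2 = 1 + sinhSeries ^ 2 := by
  have h := exp_mul_exp_neg_eq_one (A := ℚ)
  have hev : evalNegHom (exp ℚ) = rescale (-1 : ℚ) (exp ℚ) := rfl
  rw [hev] at h
  have h4 : C (R := ℚ) (1/2) * C (R := ℚ) (1/2) * 4 = 1 := by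
    have h44 : (4 : ℚ⟦X⟧) = C (R := ℚ) 4 := (map_ofNat (C (R := ℚ)) 4).symm
    rw [h44, ← map_mul, ← map_mul]
    norm_num
  rw [coshSeries, sinhSeries]
  linear_combination (4 * C (R := ℚ) (1/2) * C (R := ℚ) (1/2)) * h + h4

lemma coeff_sinh (n : ℕ) :
    coeff (R := ℚ) n sinhSeries = if Odd n then 1 / (n.factorial : ℚ) else 0 := by
  rw [sinhSeries, coeff_C_mul, map_sub, coeff_rescale, coeff_exp]
  simp only [Algebra.algebraMap_self, RingHom.id_apply]
  rcases Nat.even_or_odd n with he | ho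
  · rw [if_neg (by simpa [Nat.not_odd_iff_even] using he), he.neg_one_pow]
    ring
  · rw [if_pos ho, ho.neg_one_pow]
    ring

lemma cc_sinh : constantCoeff (R := ℚ) sinhSeries = 0 := by
  rw [← coeff_zero_eq_constantCoeff_apply, coeff_sinh]
  simp [Nat.odd_iff]

/-! ### arcsinh coefficients -/

lemma coeff_ars_even (k : ℕ) : coeff (R := ℚ) (2 * k) arsinhSeriesQ = 0 := by
  rw [arsinhSeriesQ, coeff_mk, if_neg]
  rintro ⟨m, hm⟩
  omega

lemma coeff_ars_odd (k : ℕ) :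
    coeff (R := ℚ) (2 * k + 1) arsinhSeriesQ
      = (-1 : ℚ) ^ k * ((2 * k).factorial : ℚ)
          / (4 ^ k * ((k.factorial : ℚ)) ^ 2 * (2 * (k : ℚ) + 1)) := by
  rw [arsinhSeriesQ, coeff_mk, if_pos ⟨k, by ring⟩]
  have h1 : (2 * k + 1) / 2 = k := by omega
  have h2 : 2 * k + 1 - 1 = 2 * k := by omega
  rw [h1, h2]
  push_cast
  ring

lemma coeff_ars_zero : coeff (R := ℚ) 0 arsinhSeriesQ = 0 := by
  simpa using coeff_ars_even 0

lemma coeff_ars_one : coeff (R := ℚ) 1 arsinhSeriesQ = 1 := by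
  have := coeff_ars_odd 0
  norm_num at this
  simpa using this

lemma ccA : constantCoeff (R := ℚ) arsinhSeriesQ = 0 := by
  rw [← coeff_zero_eq_constantCoeff_apply]
  exact coeff_ars_zero

lemma hrec (n : ℕ) :
    ((n : ℚ) + 2) * ((n : ℚ) + 1) * coeff (R := ℚ) (n + 2) arsinhSeriesQ
      + (n : ℚ) ^ 2 * coeff (R := ℚ) n arsinhSeriesQ = 0 := by
  rcases Nat.even_or_odd n with ⟨k, rfl⟩ | ⟨k, rfl⟩
  · have e1 : k + k = 2 * k := by ring
    have e2 : k + k + 2 = 2 * (k + 1) := by ring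
    rw [e2, e1, coeff_ars_even, coeff_ars_even]
    ring
  · have e2 : 2 * k + 1 + 2 = 2 * (k + 1) + 1 := by ring
    rw [e2, coeff_ars_odd, coeff_ars_odd]
    have hf1 : (((2 * (k + 1)).factorial : ℚ))
        = (2 * (k : ℚ) + 2) * (2 * (k : ℚ) + 1) * ((2 * k).factorial : ℚ) := by
      have e3 : 2 * (k + 1) = (2 * k + 1) + 1 := by ring
      rw [e3, Nat.factorial_succ, Nat.factorial_succ]
      push_cast
      ring
    have hf2 : (((k + 1).factorial : ℚ)) = ((k : ℚ) + 1) * (k.factorial : ℚ) := by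
      rw [Nat.factorial_succ]
      push_cast
      ring
    rw [hf1, hf2]
    have nz1 : (4 : ℚ) ^ k ≠ 0 := by positivity
    have nz2 : ((k.factorial : ℚ)) ≠ 0 := Nat.cast_ne_zero.mpr k.factorial_ne_zero
    have nz3 : (2 * (k : ℚ) + 1) ≠ 0 := by positivity
    have nz4 : (2 * (k : ℚ) + 3) ≠ 0 := by positivity
    have nz5 : (2 * ((k : ℚ) + 1) + 1) ≠ 0 := by positivity
    push_cast
    field_simp
    ring

lemma arsinh_ode :
    d⁄dX ℚ (d⁄dX ℚ arsinhSeriesQ) * (1 + X ^ 2) + X * d⁄dX ℚ arsinhSeriesQ = 0 := by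
  ext n
  have hdd : ∀ m : ℕ, coeff (R := ℚ) m (d⁄dX ℚ (d⁄dX ℚ arsinhSeriesQ))
      = coeff (R := ℚ) (m + 2) arsinhSeriesQ * ((m : ℚ) + 2) * ((m : ℚ) + 1) := by
    intro m
    rw [coeff_derivative, coeff_derivative]
    push_cast
    ring
  simp only [mul_add, mul_one, map_add, map_zero]
  rcases n with _ | _ | m
  · rw [hdd 0, mul_comm _ (X ^ 2 : ℚ⟦X⟧), coeff_X_pow_mul', if_neg (by omega),
      coeff_zero_X_mul]
    have h := hrec 0
    push_cast at h ⊢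
    linear_combination h
  · rw [hdd 1, mul_comm _ (X ^ 2 : ℚ⟦X⟧), coeff_X_pow_mul', if_neg (by omega),
      coeff_succ_X_mul, coeff_derivative]
    have h := hrec 1
    push_cast at h ⊢
    linear_combination h
  · rw [hdd (m + 2), mul_comm _ (X ^ 2 : ℚ⟦X⟧), coeff_X_pow_mul', if_pos (by omega),
      show m + 2 - 2 = m from by omega, hdd m, coeff_succ_X_mul, coeff_derivative]
    have h := hrec (m + 2)
    push_cast at h ⊢
    linear_combination h

lemma cc_dA : constantCoeff (R := ℚ) (d⁄dX ℚ arsinhSeriesQ) = 1 := by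
  rw [← coeff_zero_eq_constantCoeff_apply, coeff_derivative]
  norm_num [coeff_ars_one]

lemma darsinh_sq : (d⁄dX ℚ arsinhSeriesQ) ^ 2 * (1 + X ^ 2) = 1 := by
  have hd : d⁄dX ℚ ((d⁄dX ℚ arsinhSeriesQ) ^ 2 * (1 + X ^ 2)) = 0 := by
    rw [dmul]
    have h1 : d⁄dX ℚ ((d⁄dX ℚ arsinhSeriesQ) ^ 2)
        = 2 * d⁄dX ℚ arsinhSeriesQ * d⁄dX ℚ (d⁄dX ℚ arsinhSeriesQ) := by
      rw [sq, dmul]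
      ring
    have h2 : d⁄dX ℚ (1 + X ^ 2 : ℚ⟦X⟧) = 2 * X := by
      rw [map_add, sq, dmul, derivative_X]
      simp
      ring
    rw [h1, h2]
    linear_combination (2 * d⁄dX ℚ arsinhSeriesQ) * arsinh_ode
  have hc := eq_C_of_d_eq_zero hd
  have hcc : constantCoeff (R := ℚ) ((d⁄dX ℚ arsinhSeriesQ) ^ 2 * (1 + X ^ 2)) = 1 := by
    rw [map_mul, map_add, map_pow, map_pow, map_one, cc_dA, constantCoeff_X]
    norm_num
  rw [hc, hcc, map_one]

/-! ### the unit factor V and its inverse W -/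

noncomputable def Vs : PowerSeries ℚ := PowerSeries.mk fun n => coeff (R := ℚ) (n + 1) arsinhSeriesQ

noncomputable def Ws : PowerSeries ℚ := Vs⁻¹

lemma X_mul_Vs : X * Vs = arsinhSeriesQ := by
  ext n
  cases n with
  | zero => rw [coeff_zero_X_mul, coeff_ars_zero]
  | succ m => rw [coeff_succ_X_mul, Vs, coeff_mk]

lemma cc_Vs : constantCoeff (R := ℚ) Vs = 1 := by
  rw [← coeff_zero_eq_constantCoeff_apply, Vs, coeff_mk]
  exact coeff_ars_one

lemma VW : Vs * Ws = 1 := by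
  show Vs * Vs⁻¹ = 1
  exact PowerSeries.mul_inv_cancel _ (by rw [cc_Vs]; norm_num)

lemma cc_Ws : constantCoeff (R := ℚ) Ws = 1 := by
  have h := congrArg (constantCoeff (R := ℚ)) VW
  rw [map_mul, map_one, cc_Vs, one_mul] at h
  exact h

lemma dA_decomp : d⁄dX ℚ arsinhSeriesQ = Vs + X * d⁄dX ℚ Vs := by
  have h := congrArg (d⁄dX ℚ) X_mul_Vs
  rw [dmul, derivative_X, mul_one] at h
  linear_combination -h

lemma dWs : d⁄dX ℚ Ws = -(d⁄dX ℚ Vs * Ws ^ 2) := by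
  have h := congrArg (d⁄dX ℚ) VW
  rw [dmul, Derivation.map_one_eq_zero] at h
  linear_combination Ws * h - d⁄dX ℚ Ws * VW

lemma subcore (s : ℕ) :
    coeff (R := ℚ) (s + 1) (d⁄dX ℚ arsinhSeriesQ * Ws ^ (s + 2)) = 0 := by
  have hdec : d⁄dX ℚ arsinhSeriesQ * Ws ^ (s + 2)
      = Ws ^ (s + 1) + X * (d⁄dX ℚ Vs * Ws ^ (s + 2)) := by
    rw [dA_decomp]
    linear_combination Ws ^ (s + 1) * VW
  have hQ : d⁄dX ℚ (Ws ^ (s + 1))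
      = C (R := ℚ) (-((s : ℚ) + 1)) * (d⁄dX ℚ Vs * Ws ^ (s + 2)) := by
    rw [Derivation.leibniz_pow, smul_eq_mul, nsmul_eq_mul, dWs,
      show s + 1 - 1 = s from rfl, ← map_natCast (C (R := ℚ)) (s + 1), map_neg,
      show ((s + 1 : ℕ) : ℚ) = (s : ℚ) + 1 from by push_cast; ring]
    ring
  have h1 := congrArg (coeff (R := ℚ) (s + 1)) hdec
  rw [map_add, coeff_succ_X_mul] at h1
  have h2 : coeff (R := ℚ) s (d⁄dX ℚ (Ws ^ (s + 1)))
      = coeff (R := ℚ) (s + 1) (Ws ^ (s + 1)) * ((s : ℚ) + 1) := coeff_derivative _ s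
  have h3 := congrArg (coeff (R := ℚ) s) hQ
  rw [coeff_C_mul] at h3
  have hs : ((s : ℚ) + 1) ≠ 0 := by positivity
  have h4 : ((s : ℚ) + 1) * (coeff (R := ℚ) (s + 1) (Ws ^ (s + 1))
      + coeff (R := ℚ) s (d⁄dX ℚ Vs * Ws ^ (s + 2))) = 0 := by
    linear_combination h3 - h2
  have h5 := (mul_eq_zero.mp h4).resolve_left hs
  rw [h1, h5]

lemma core (n k : ℕ) (hk : k ≤ n) :
    coeff (R := ℚ) n (arsinhSeriesQ ^ k * (d⁄dX ℚ arsinhSeriesQ * Ws ^ (n + 1)))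
      = if k = n then 1 else 0 := by
  rw [← X_mul_Vs, mul_pow, mul_assoc, coeff_X_pow_mul', if_pos hk]
  have hrw : Vs ^ k * (d⁄dX ℚ (X * Vs) * Ws ^ (n + 1))
      = d⁄dX ℚ (X * Vs) * Ws ^ (n - k + 1) * (Vs * Ws) ^ k := by
    rw [show n + 1 = (n - k + 1) + k from by omega, pow_add]
    ring
  rw [hrw, VW, one_pow, mul_one]
  rcases Nat.eq_or_lt_of_le hk with rfl | hlt
  · rw [if_pos rfl, Nat.sub_self, pow_one, coeff_zero_eq_constantCoeff_apply, map_mul,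
      X_mul_Vs, cc_dA, cc_Ws, one_mul]
  · rw [if_neg (by omega)]
    obtain ⟨s, hs⟩ : ∃ s, n - k = s + 1 := ⟨n - k - 1, by omega⟩
    rw [hs, X_mul_Vs]
    exact subcore s

lemma lemmaR (F : PowerSeries ℚ) (n : ℕ) :
    coeff (R := ℚ) n (pcomp arsinhSeriesQ F * (d⁄dX ℚ arsinhSeriesQ * Ws ^ (n + 1)))
      = coeff (R := ℚ) n F := by
  rw [coeff_pcomp_mul ccA]
  rw [Finset.sum_eq_single n]
  · rw [core n n le_rfl, if_pos rfl, mul_one]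
  · intro k hk hkn
    rw [core n k (by simp only [Finset.mem_range] at hk; omega), if_neg hkn, mul_zero]
  · intro h
    simp at h

lemma two_ne_zero' : (2 : ℚ⟦X⟧) ≠ 0 := by
  intro h
  have h2 := congrArg (constantCoeff (R := ℚ)) h
  rw [map_ofNat, map_zero] at h2
  norm_num at h2

lemma pcomp_sinh : pcomp arsinhSeriesQ sinhSeries = X := by
  have he0 : coeff (R := ℚ) 0 (pcomp arsinhSeriesQ sinhSeries) = 0 := by
    rw [coeff_pcomp, Finset.sum_range_one, coeff_sinh]
    simp [Nat.odd_iff]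
  have he1 : coeff (R := ℚ) 1 (pcomp arsinhSeriesQ sinhSeries) = 1 := by
    rw [coeff_pcomp, Finset.sum_range_succ, Finset.sum_range_one, coeff_sinh, coeff_sinh,
      pow_one, pow_zero, coeff_ars_one]
    simp [Nat.odd_iff]
  have hdE : d⁄dX ℚ (pcomp arsinhSeriesQ sinhSeries)
      = pcomp arsinhSeriesQ coshSeries * d⁄dX ℚ arsinhSeriesQ := by
    rw [pcomp_derivative ccA, d_sinh]
  have hcosh2 : (pcomp arsinhSeriesQ coshSeries) ^ 2
      = 1 + (pcomp arsinhSeriesQ sinhSeries) ^ 2 := by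
    rw [← pcomp_pow ccA, ← pcomp_pow ccA, cosh_sq, pcomp_add, pcomp_one]
  have hsq : (d⁄dX ℚ (pcomp arsinhSeriesQ sinhSeries)) ^ 2 * (1 + X ^ 2)
      = 1 + (pcomp arsinhSeriesQ sinhSeries) ^ 2 := by
    rw [hdE]
    calc (pcomp arsinhSeriesQ coshSeries * d⁄dX ℚ arsinhSeriesQ) ^ 2 * (1 + X ^ 2)
        = (pcomp arsinhSeriesQ coshSeries) ^ 2
            * ((d⁄dX ℚ arsinhSeriesQ) ^ 2 * (1 + X ^ 2)) := by ring
      _ = (1 + (pcomp arsinhSeriesQ sinhSeries) ^ 2) * 1 := by rw [hcosh2, darsinh_sq]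
      _ = 1 + (pcomp arsinhSeriesQ sinhSeries) ^ 2 := by ring
  have hdEne : d⁄dX ℚ (pcomp arsinhSeriesQ sinhSeries) ≠ 0 := by
    intro h
    have h2 := congrArg (coeff (R := ℚ) 0) h
    rw [coeff_derivative, he1, map_zero] at h2
    norm_num at h2
  have hode2 : d⁄dX ℚ (d⁄dX ℚ (pcomp arsinhSeriesQ sinhSeries)) * (1 + X ^ 2)
      + X * d⁄dX ℚ (pcomp arsinhSeriesQ sinhSeries) - pcomp arsinhSeriesQ sinhSeries = 0 := by
    have hd := congrArg (d⁄dX ℚ) hsq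
    rw [dmul, map_add, Derivation.map_one_eq_zero, map_add, Derivation.map_one_eq_zero] at hd
    rw [show d⁄dX ℚ ((d⁄dX ℚ (pcomp arsinhSeriesQ sinhSeries)) ^ 2)
        = 2 * d⁄dX ℚ (pcomp arsinhSeriesQ sinhSeries)
            * d⁄dX ℚ (d⁄dX ℚ (pcomp arsinhSeriesQ sinhSeries)) from by rw [sq, dmul]; ring,
      show d⁄dX ℚ (X ^ 2 : ℚ⟦X⟧) = 2 * X from by rw [sq, dmul, derivative_X]; ring,
      show d⁄dX ℚ ((pcomp arsinhSeriesQ sinhSeries) ^ 2)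
        = 2 * pcomp arsinhSeriesQ sinhSeries * d⁄dX ℚ (pcomp arsinhSeriesQ sinhSeries)
          from by rw [sq, dmul]; ring] at hd
    have key : (2 : ℚ⟦X⟧) * d⁄dX ℚ (pcomp arsinhSeriesQ sinhSeries)
        * (d⁄dX ℚ (d⁄dX ℚ (pcomp arsinhSeriesQ sinhSeries)) * (1 + X ^ 2)
            + X * d⁄dX ℚ (pcomp arsinhSeriesQ sinhSeries)
            - pcomp arsinhSeriesQ sinhSeries) = 0 := by
      linear_combination hd
    rcases mul_eq_zero.mp key with h | h
    · rcases mul_eq_zero.mp h with h2 | h2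
      · exact absurd h2 two_ne_zero'
      · exact absurd h2 hdEne
    · exact h
  ext n
  induction n using Nat.strong_induction_on with
  | _ n ih =>
    rcases n with _ | _ | p
    · rw [he0, coeff_X, if_neg (by omega)]
    · rw [he1, coeff_X, if_pos rfl]
    · have hrel := congrArg (coeff (R := ℚ) p) hode2
      simp only [mul_add, mul_one, map_add, map_sub, map_zero] at hrel
      rw [mul_comm (d⁄dX ℚ (d⁄dX ℚ (pcomp arsinhSeriesQ sinhSeries))) (X ^ 2 : ℚ⟦X⟧)] at hrel
      rcases p with _ | _ | q
      · -- relation at index 0 : 2*e₂ - e₀ = 0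
        rw [coeff_X_pow_mul', if_neg (by omega), coeff_zero_X_mul, coeff_derivative,
          coeff_derivative, he0] at hrel
        rw [coeff_X, if_neg (by omega)]
        push_cast at hrel
        linarith
      · -- relation at index 1 : 6*e₃ + e₁ - e₁ = 0
        rw [coeff_X_pow_mul', if_neg (by omega), coeff_succ_X_mul, coeff_derivative,
          coeff_derivative, coeff_derivative, he1] at hrel
        rw [coeff_X, if_neg (by omega)]
        push_cast at hrel
        linarith
      · -- relation at index q+2
        have hq : coeff (R := ℚ) (q + 2) (pcomp arsinhSeriesQ sinhSeries) = 0 := by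
          rw [ih (q + 2) (by omega), coeff_X, if_neg (by omega)]
        rw [coeff_X_pow_mul', if_pos (by omega), show q + 2 - 2 = q from rfl,
          coeff_derivative, coeff_derivative, coeff_derivative, coeff_derivative,
          coeff_succ_X_mul, coeff_derivative, hq] at hrel
        rw [coeff_X, if_neg (by omega)]
        push_cast at hrel
        have hne : ((q : ℚ) + 2 + 2) * ((q : ℚ) + 2 + 1) ≠ 0 := by positivity
        rcases mul_eq_zero.mp (by linarith : (((q : ℚ) + 2 + 2) * ((q : ℚ) + 2 + 1))
            * coeff (R := ℚ) (q + 2 + 2) (pcomp arsinhSeriesQ sinhSeries) = 0) with h | h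
        · exact absurd h hne
        · exact h

end Norlund


/-- With the Nörlund D-numbers `d_n = n!·[t^n]((t/sinh t)^n)`, the exponential
generating function identity `(Σ_n (d_n/n!) z^n) · A(z) = z · A'(z)` holds in
`ℚ[[z]]`, where `A` is the arcsinh power series. -/
theorem norlund_egf_eq_log_deriv_arsinh
    (ψ : PowerSeries ℚ) (hψ : ψ * sinhSeries = PowerSeries.X) :
    (PowerSeries.mk fun n =>
        ((Nat.factorial n : ℚ) * PowerSeries.coeff (R := ℚ) n (ψ ^ n)) / (Nat.factorial n : ℚ))
      * arsinhSeriesQ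
    = PowerSeries.X * D arsinhSeriesQ := by
  open Norlund in
  have hmk : (PowerSeries.mk fun n =>
        ((Nat.factorial n : ℚ) * PowerSeries.coeff (R := ℚ) n (ψ ^ n)) / (Nat.factorial n : ℚ))
      = PowerSeries.mk fun n => PowerSeries.coeff (R := ℚ) n (ψ ^ n) := by
    ext n
    rw [coeff_mk, coeff_mk, mul_div_cancel_left₀ _ (Nat.cast_ne_zero.mpr n.factorial_ne_zero)]
  rw [hmk]
  have hKψ : pcomp arsinhSeriesQ ψ = Vs := by
    have h1 := pcomp_mul ccA ψ sinhSeries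
    rw [hψ, pcomp_X ccA, pcomp_sinh] at h1
    have h2 : X * pcomp arsinhSeriesQ ψ = X * Vs := by
      rw [X_mul_Vs]
      linear_combination -h1
    exact mul_left_cancel₀ X_ne_zero h2
  have hcn : ∀ n : ℕ, PowerSeries.coeff (R := ℚ) n (ψ ^ n)
      = PowerSeries.coeff (R := ℚ) n (d⁄dX ℚ arsinhSeriesQ * Ws) := by
    intro n
    rw [← lemmaR (ψ ^ n) n, pcomp_pow ccA, hKψ]
    congr 1
    calc Vs ^ n * (d⁄dX ℚ arsinhSeriesQ * Ws ^ (n + 1))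
        = (d⁄dX ℚ arsinhSeriesQ * Ws) * (Vs * Ws) ^ n := by ring
      _ = d⁄dX ℚ arsinhSeriesQ * Ws := by rw [VW, one_pow, mul_one]
  have hseries : (PowerSeries.mk fun n => PowerSeries.coeff (R := ℚ) n (ψ ^ n))
      = d⁄dX ℚ arsinhSeriesQ * Ws := by
    ext n
    rw [coeff_mk, hcn]
  rw [hseries, D_eq]
  have hAe : arsinhSeriesQ = X * Vs := X_mul_Vs.symm
  linear_combination (d⁄dX ℚ arsinhSeriesQ * Ws) * hAe + (X * d⁄dX ℚ arsinhSeriesQ) * VW
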